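/- Let $R$ be a perfect valuation ring of characteristic $p$ with fraction field $\mathrm{Fr}\,R$ and valuation $v_R$. For $r \in \mathbb{R}^{>0}$, define $W(\mathrm{Fr}\,R)^{\dagger,r} = \{x = \sum_{i=0}^{\infty} p^i [x_i] \in W(\mathrm{Fr}\,R) : i + r\, v_R(x_i) \to +\infty\}$, where $[\cdot]$ denotes the Teichmüller lift. Then $W(\mathrm{Fr}\,R)^{\dagger,r}$ is a subring of $W(\mathrm{Fr}\,R)$. -/
import Mathlib

namespace OvercAux
set_option linter.unusedSectionVars false

open WittVector Finset

variable {p : ℕ} [hp : Fact p.Prime] {K : Type*} [Field K] [CharP K p] [PerfectRing K p]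

local notation "𝕎" => WittVector p

/-- the `p^i`-th root map -/
noncomputable def rt (x : 𝕎 K) (i : ℕ) : K := (⇑(frobeniusEquiv K p).symm)^[i] (x.coeff i)

lemma rootpow (i : ℕ) (c : K) : ((⇑(frobeniusEquiv K p).symm)^[i] c) ^ p ^ i = c := by
  induction i generalizing c with
  | zero => simp
  | succ n ih =>
    rw [Function.iterate_succ_apply, pow_succ, pow_mul, ih, frobeniusEquiv_symm_pow_p]

lemma rt_pow (x : 𝕎 K) (i : ℕ) : (rt x i) ^ p ^ i = x.coeff i := rootpow i _

lemma root_zero (i : ℕ) : (⇑(frobeniusEquiv K p).symm)^[i] (0 : K) = 0 :=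
  Function.iterate_fixed (map_zero _) i

lemma rt_eq_zero_iff (x : 𝕎 K) (i : ℕ) : rt x i = 0 ↔ x.coeff i = 0 := by
  constructor
  · intro h
    have := congrArg (· ^ p ^ i) h
    simpa [rt_pow x i, zero_pow (pow_ne_zero i hp.out.ne_zero)] using this
  · intro h; rw [rt, h]; exact root_zero i

lemma pt_coeff (s : K) (j i : ℕ) :
    (teichmuller p s * (p : 𝕎 K) ^ j).coeff i = if i = j then s ^ p ^ j else 0 := by
  induction j generalizing i with
  | zero =>
    cases i with
    | zero => simp
    | succ i => simp
  | succ j ih =>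
    have h : teichmuller p s * (p : 𝕎 K) ^ (j + 1) = (teichmuller p s * (p : 𝕎 K) ^ j) * p := by
      ring
    rw [h]
    cases i with
    | zero => rw [mul_charP_coeff_zero]; exact (if_neg (Nat.succ_ne_zero j).symm).symm
    | succ i =>
      rw [mul_charP_coeff_succ, ih]
      by_cases hij : i = j
      · subst hij; rw [if_pos rfl, if_pos rfl, ← pow_mul, ← pow_succ]
      · rw [if_neg hij, if_neg (by omega), zero_pow hp.out.ne_zero]

lemma sum_pt_coeff (s : ℕ → K) (m i : ℕ) :
    (∑ j ∈ range m, teichmuller p (s j) * (p : 𝕎 K) ^ j).coeff i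
      = if i < m then s i ^ p ^ i else 0 := by
  induction m generalizing i with
  | zero => simp
  | succ m ih =>
    rw [sum_range_succ, coeff_add_of_disjoint _ _ _ ?_]
    · rw [ih, pt_coeff]
      rcases lt_trichotomy i m with h | h | h
      · rw [if_pos h, if_neg (by omega), if_pos (by omega), add_zero]
      · subst h; rw [if_neg (by omega), if_pos rfl, if_pos (by omega), zero_add]
      · rw [if_neg (by omega), if_neg (by omega), if_neg (by omega), add_zero]
    · intro n
      rw [ih, pt_coeff]
      by_cases hn : n < m
      · exact Or.inr (if_neg (by omega))
      · exact Or.inl (if_neg hn)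

lemma init_coeff (x : 𝕎 K) (m i : ℕ) :
    (init m x).coeff i = if i < m then x.coeff i else 0 := by
  classical
  simp [init, WittVector.select, WittVector.coeff_mk]

lemma coeff_init_self (z : 𝕎 K) (j : ℕ) : (init (j + 1) z).coeff j = z.coeff j := by
  rw [init_coeff, if_pos (by omega)]

lemma init_eq_sum (x : 𝕎 K) (m : ℕ) :
    init m x = ∑ j ∈ range m, teichmuller p (rt x j) * (p : 𝕎 K) ^ j := by
  apply WittVector.ext
  intro i
  rw [sum_pt_coeff (fun j => rt x j) m i, init_coeff]
  split
  · rw [rt_pow]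
  · rfl


lemma init_teichmuller (a : K) (m : ℕ) (hm : 0 < m) :
    init m (teichmuller p a) = teichmuller p a := by
  apply WittVector.ext
  intro i
  rw [init_coeff]
  cases i with
  | zero => rw [if_pos hm]
  | succ i => rw [teichmuller_coeff_pos _ _ (i + 1) (Nat.succ_pos i), ite_self]

lemma teich_mul_coeff (a : K) (x : 𝕎 K) (n : ℕ) :
    (teichmuller p a * x).coeff n = a ^ p ^ n * x.coeff n := by
  rw [← coeff_init_self (teichmuller p a * x) n, init_mul,
    init_teichmuller a (n + 1) (Nat.succ_pos n), init_eq_sum x (n + 1), Finset.mul_sum]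
  have h3 : ∀ j ∈ range (n + 1),
      teichmuller p a * (teichmuller p (rt x j) * (p : 𝕎 K) ^ j)
        = teichmuller p (a * rt x j) * (p : 𝕎 K) ^ j := by
    intro j _
    rw [← mul_assoc, ← map_mul]
  rw [Finset.sum_congr rfl h3, coeff_init_self, sum_pt_coeff (fun j => a * rt x j) (n+1) n,
    if_pos (Nat.lt_succ_self n), mul_pow, rt_pow]

lemma add_coeff_right_zero (A B : 𝕎 K) (n : ℕ) (hB : ∀ m ≤ n, B.coeff m = 0) :
    (A + B).coeff n = A.coeff n := by
  have hB0 : init (n + 1) B = 0 := by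
    apply WittVector.ext
    intro i
    rw [init_coeff, WittVector.zero_coeff]
    split
    · exact hB i (by omega)
    · rfl
  rw [← coeff_init_self (A + B) n, init_add, hB0, add_zero, init_init, coeff_init_self]


lemma coeff_add_init (z w : 𝕎 K) (n : ℕ) :
    (z + w).coeff n = (init (n+1) z + init (n+1) w).coeff n := by
  rw [← coeff_init_self (z + w) n, init_add, coeff_init_self]

section Val

variable (v : K → ℝ) (hvmul : ∀ x y : K, x ≠ 0 → y ≠ 0 → v (x * y) = v x + v y)
variable (hvadd : ∀ x y : K, x ≠ 0 → y ≠ 0 → x + y ≠ 0 → min (v x) (v y) ≤ v (x + y))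

include hvmul

lemma v_one : v 1 = 0 := by
  have := hvmul 1 1 one_ne_zero one_ne_zero
  rw [mul_one] at this
  linarith

lemma v_pow (c : K) (hc : c ≠ 0) (m : ℕ) : v (c ^ m) = m * v c := by
  induction m with
  | zero => simpa using v_one v hvmul
  | succ n ih =>
    rw [pow_succ, hvmul _ _ (pow_ne_zero _ hc) hc, ih]
    push_cast
    ring

lemma v_rt (x : 𝕎 K) (i : ℕ) (h : x.coeff i ≠ 0) :
    v (x.coeff i) = (p : ℝ) ^ i * v (rt x i) := by
  have h2 : rt x i ≠ 0 := fun h0 => h ((rt_eq_zero_iff x i).mp h0)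
  calc v (x.coeff i) = v ((rt x i) ^ p ^ i) := by rw [rt_pow]
    _ = ((p ^ i : ℕ) : ℝ) * v (rt x i) := v_pow v hvmul _ h2 _
    _ = (p : ℝ) ^ i * v (rt x i) := by push_cast; ring

lemma v_inv_mul (a c : K) (ha : a ≠ 0) (hc : c ≠ 0) : v (a⁻¹ * c) = v c - v a := by
  have hinv : a⁻¹ ≠ 0 := inv_ne_zero ha
  have h1 : v (a * a⁻¹) = v a + v a⁻¹ := hvmul _ _ ha hinv
  rw [mul_inv_cancel₀ ha, v_one v hvmul] at h1
  rw [hvmul _ _ hinv hc]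
  linarith

include hvadd

/-- the valuation subring -/
def O : Subring K where
  carrier := {c : K | c = 0 ∨ 0 ≤ v c}
  zero_mem' := Or.inl rfl
  one_mem' := Or.inr (le_of_eq (v_one v hvmul).symm)
  add_mem' := by
    rintro a b (rfl | ha) hb
    · simpa using hb
    rcases hb with rfl | hb
    · simpa using Or.inr ha
    by_cases hab : a + b = 0
    · exact Or.inl hab
    by_cases ha0 : a = 0
    · subst ha0; simpa using Or.inr hb
    by_cases hb0 : b = 0
    · subst hb0; simpa using Or.inr ha
    refine Or.inr (le_trans (le_min ha hb) (hvadd a b ha0 hb0 hab))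
  neg_mem' := by
    rintro a (rfl | ha)
    · simp
    by_cases ha0 : a = 0
    · subst ha0; simp
    by_cases h1 : (-1 : K) = 1
    · right
      have : -a = a := by rw [← neg_one_mul, h1, one_mul]
      rwa [this]
    · right
      have hm1 : (-1 : K) ≠ 0 := by
        intro h; exact (one_ne_zero (α := K)) (by linear_combination -h)
      have h2 : v ((-1 : K) * (-1 : K)) = v (-1 : K) + v (-1 : K) := hvmul _ _ hm1 hm1
      rw [neg_one_mul, neg_neg, v_one v hvmul] at h2
      have h3 : v (-a) = v ((-1 : K) * a) := by rw [neg_one_mul]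
      rw [h3, hvmul _ _ hm1 ha0]
      linarith
  mul_mem' := by
    rintro a b (rfl | ha) hb
    · simp
    rcases hb with rfl | hb
    · simp
    by_cases ha0 : a = 0
    · subst ha0; simp
    by_cases hb0 : b = 0
    · subst hb0; simp
    exact Or.inr (by rw [hvmul _ _ ha0 hb0]; linarith)

/-- Witt vectors with integral coefficients -/
noncomputable def S0 : Subring (𝕎 K) := (WittVector.map (R := (O v hvmul hvadd)) (S := K)
  (Subring.subtype _)).range

lemma mem_S0 (x : 𝕎 K) :
    x ∈ S0 v hvmul hvadd ↔ ∀ i, x.coeff i = 0 ∨ 0 ≤ v (x.coeff i) := by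
  constructor
  · rintro ⟨y, rfl⟩ i
    rw [WittVector.map_coeff]
    exact (y.coeff i).2
  · intro h
    exact ⟨WittVector.mk p (fun i => ⟨x.coeff i, h i⟩),
      WittVector.ext fun i => by rw [WittVector.map_coeff]; rfl⟩

lemma key_aux (a : K) (ha : a ≠ 0) (n : ℕ) (u : 𝕎 K)
    (hu : ∀ i, u.coeff i = 0 ∨ 0 ≤ v (u.coeff i)) :
    (teichmuller p a * u).coeff n = 0 ∨
      (p : ℝ) ^ n * v a ≤ v ((teichmuller p a * u).coeff n) := by
  rw [teich_mul_coeff]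
  rcases hu n with h | h
  · left; rw [h, mul_zero]
  by_cases hz : u.coeff n = 0
  · left; rw [hz, mul_zero]
  right
  have hap : a ^ p ^ n ≠ 0 := pow_ne_zero _ ha
  rw [hvmul _ _ hap hz, v_pow v hvmul a ha]
  push_cast
  nlinarith [pow_pos (show (0:ℝ) < p from Nat.cast_pos.mpr hp.out.pos) n]


lemma add_shape (x y : 𝕎 K) (n : ℕ) :
    (x + y).coeff n = 0 ∨ ∃ j ≤ n, ∃ w : 𝕎 K, (w = x ∨ w = y) ∧ rt w j ≠ 0 ∧
      (p : ℝ) ^ n * v (rt w j) ≤ v ((x + y).coeff n) := by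
  classical
  set F : Finset (ℕ × Bool) :=
    (range (n+1) ×ˢ ({false, true} : Finset Bool)).filter
      (fun q => rt (cond q.2 x y) q.1 ≠ 0) with hF_def
  by_cases hF : F.Nonempty
  · obtain ⟨q0, hq0, hmin⟩ := Finset.exists_min_image F
      (fun q => v (rt (cond q.2 x y) q.1)) hF
    set w0 := cond q0.2 x y with hw0
    set a := rt w0 q0.1 with ha_def
    have hq0' := Finset.mem_filter.mp hq0
    have ha : a ≠ 0 := hq0'.2
    have hj0n : q0.1 ≤ n := by
      have := (Finset.mem_product.mp hq0'.1).1
      rw [Finset.mem_range] at this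
      omega
    have hmin' : ∀ j ≤ n, ∀ b : Bool, rt (cond b x y) j ≠ 0 → v a ≤ v (rt (cond b x y) j) := by
      intro j hj b hrz
      refine hmin (j, b) (Finset.mem_filter.mpr ⟨Finset.mem_product.mpr
        ⟨Finset.mem_range.mpr (by omega), by simp⟩, hrz⟩)
    have hsum : ∀ z : 𝕎 K, (∀ j ≤ n, rt z j ≠ 0 → v a ≤ v (rt z j)) →
        init (n+1) z = teichmuller p a *
          ∑ j ∈ range (n+1), teichmuller p (a⁻¹ * rt z j) * (p : 𝕎 K) ^ j := by
      intro z _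
      rw [Finset.mul_sum, init_eq_sum]
      refine Finset.sum_congr rfl fun j _ => ?_
      rw [← mul_assoc, ← map_mul, mul_inv_cancel_left₀ ha]
    have hu : ∀ z : 𝕎 K, (∀ j ≤ n, rt z j ≠ 0 → v a ≤ v (rt z j)) →
        (∑ j ∈ range (n+1), teichmuller p (a⁻¹ * rt z j) * (p : 𝕎 K) ^ j)
          ∈ S0 v hvmul hvadd := by
      intro z hz
      rw [mem_S0]
      intro i
      rw [sum_pt_coeff]
      by_cases hi : i < n + 1
      · rw [if_pos hi]
        by_cases hz0 : rt z i = 0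
        · left; rw [hz0, mul_zero, zero_pow (pow_ne_zero i hp.out.ne_zero)]
        · right
          have hvai : v a ≤ v (rt z i) := hz i (by omega) hz0
          have hvv : v (a⁻¹ * rt z i) = v (rt z i) - v a := v_inv_mul v hvmul a _ ha hz0
          have hne : a⁻¹ * rt z i ≠ 0 := mul_ne_zero (inv_ne_zero ha) hz0
          rw [v_pow v hvmul _ hne, hvv]
          exact mul_nonneg (by positivity) (by linarith)
      · rw [if_neg hi]; exact Or.inl rfl
    have hzx : ∀ j ≤ n, rt x j ≠ 0 → v a ≤ v (rt x j) := by
      intro j hj h; simpa using hmin' j hj true h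
    have hzy : ∀ j ≤ n, rt y j ≠ 0 → v a ≤ v (rt y j) := by
      intro j hj h; simpa using hmin' j hj false h
    set ux := ∑ j ∈ range (n+1), teichmuller p (a⁻¹ * rt x j) * (p : 𝕎 K) ^ j with hux
    set uy := ∑ j ∈ range (n+1), teichmuller p (a⁻¹ * rt y j) * (p : 𝕎 K) ^ j with huy
    have huS : (ux + uy) ∈ S0 v hvmul hvadd :=
      Subring.add_mem _ (hu x hzx) (hu y hzy)
    have heq : (x + y).coeff n = (teichmuller p a * (ux + uy)).coeff n := by
      rw [coeff_add_init, hsum x hzx, hsum y hzy, ← mul_add]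
    rcases key_aux v hvmul hvadd a ha n (ux + uy) ((mem_S0 v hvmul hvadd _).mp huS)
      with h | h
    · left; rw [heq, h]
    · right
      refine ⟨q0.1, hj0n, w0, ?_, ha, by rw [heq]; exact h⟩
      cases hb : q0.2
      · right; rw [hw0, hb]; rfl
      · left; rw [hw0, hb]; rfl
  · left
    have hall : ∀ z : 𝕎 K, (z = x ∨ z = y) → init (n+1) z = 0 := by
      rintro z hz
      apply WittVector.ext
      intro i
      rw [init_coeff, WittVector.zero_coeff]
      split
      case isFalse => rfl
      case isTrue hi =>
        rw [← rt_eq_zero_iff]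
        by_contra hrz
        apply hF
        rcases hz with rfl | rfl
        · exact ⟨(i, true), Finset.mem_filter.mpr ⟨Finset.mem_product.mpr
            ⟨Finset.mem_range.mpr hi, by simp⟩, by simpa using hrz⟩⟩
        · exact ⟨(i, false), Finset.mem_filter.mpr ⟨Finset.mem_product.mpr
            ⟨Finset.mem_range.mpr hi, by simp⟩, by simpa using hrz⟩⟩
    rw [coeff_add_init, hall x (Or.inl rfl), hall y (Or.inr rfl), add_zero]
    simp


lemma mul_shape (x y : 𝕎 K) (n : ℕ) :
    (x * y).coeff n = 0 ∨ ∃ i k, i + k ≤ n ∧ rt x i ≠ 0 ∧ rt y k ≠ 0 ∧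
      (p : ℝ) ^ n * (v (rt x i) + v (rt y k)) ≤ v ((x * y).coeff n) := by
  classical
  set T : ℕ × ℕ → 𝕎 K := fun q =>
    teichmuller p (rt x q.1 * rt y q.2) * (p : 𝕎 K) ^ (q.1 + q.2) with hT_def
  set F := (range (n+1)) ×ˢ (range (n+1)) with hF_def
  have hprod : (x * y).coeff n = (∑ q ∈ F, T q).coeff n := by
    have h1 : (x * y).coeff n = (init (n+1) x * init (n+1) y).coeff n := by
      rw [← coeff_init_self (x * y) n, init_mul, coeff_init_self]
    rw [h1, init_eq_sum x, init_eq_sum y, Finset.sum_mul_sum, ← Finset.sum_product']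
    congr 1
    apply Finset.sum_congr rfl
    intro q _
    rw [hT_def, mul_mul_mul_comm, ← map_mul, ← pow_add]
  set Fle := F.filter (fun q => q.1 + q.2 ≤ n) with hFle_def
  have hZ : ∀ m ≤ n, (∑ q ∈ F.filter (fun q => ¬ q.1 + q.2 ≤ n), T q).coeff m = 0 := by
    refine Finset.sum_induction T (fun z => ∀ m ≤ n, z.coeff m = 0) ?_ ?_ ?_
    · intro a b ha hb m hm
      rw [add_coeff_right_zero _ _ _ (fun m' hm' => hb m' (hm'.trans hm))]
      exact ha m hm
    · intro m _
      simp
    · intro q hq m hm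
      rw [hT_def, pt_coeff]
      have hgt : ¬ q.1 + q.2 ≤ n := (Finset.mem_filter.mp hq).2
      rw [if_neg (by omega)]
  have h2 : (x * y).coeff n = (∑ q ∈ Fle, T q).coeff n := by
    rw [hprod, ← Finset.sum_filter_add_sum_filter_not F (fun q => q.1 + q.2 ≤ n) T,
      add_coeff_right_zero _ _ _ (fun m hm => hZ m hm)]
  set Fne := Fle.filter (fun q => rt x q.1 * rt y q.2 ≠ 0) with hFne_def
  have hFle_ne : ∑ q ∈ Fle, T q = ∑ q ∈ Fne, T q := by
    symm
    apply Finset.sum_subset (Finset.filter_subset _ _)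
    intro q hq hnq
    have h0 : rt x q.1 * rt y q.2 = 0 := by
      by_contra h
      exact hnq (Finset.mem_filter.mpr ⟨hq, h⟩)
    rw [hT_def]
    simp only [h0, teichmuller_zero, zero_mul]
  by_cases hne : Fne.Nonempty
  · obtain ⟨q0, hq0, hmin⟩ := Finset.exists_min_image Fne
      (fun q => v (rt x q.1 * rt y q.2)) hne
    set c := rt x q0.1 * rt y q0.2 with hc_def
    have hq0f := Finset.mem_filter.mp hq0
    have hc : c ≠ 0 := hq0f.2
    have hcx : rt x q0.1 ≠ 0 := left_ne_zero_of_mul hc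
    have hcy : rt y q0.2 ≠ 0 := right_ne_zero_of_mul hc
    have hik : q0.1 + q0.2 ≤ n := (Finset.mem_filter.mp hq0f.1).2
    set u := ∑ q ∈ Fle, teichmuller p (c⁻¹ * (rt x q.1 * rt y q.2)) * (p : 𝕎 K) ^ (q.1 + q.2)
      with hu_def
    have hfac : ∑ q ∈ Fle, T q = teichmuller p c * u := by
      rw [hu_def, Finset.mul_sum]
      apply Finset.sum_congr rfl
      intro q _
      rw [hT_def, ← mul_assoc, ← map_mul, mul_inv_cancel_left₀ hc]
    have huS : u ∈ S0 v hvmul hvadd := by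
      rw [hu_def]
      apply Subring.sum_mem
      intro q hq
      rw [mem_S0]
      intro i
      rw [pt_coeff]
      by_cases hi : i = q.1 + q.2
      · rw [if_pos hi]
        by_cases h0 : rt x q.1 * rt y q.2 = 0
        · left
          rw [h0, mul_zero, zero_pow (pow_ne_zero _ hp.out.ne_zero)]
        · right
          have hvc : v c ≤ v (rt x q.1 * rt y q.2) :=
            hmin q (Finset.mem_filter.mpr ⟨hq, h0⟩)
          have hne' : c⁻¹ * (rt x q.1 * rt y q.2) ≠ 0 := mul_ne_zero (inv_ne_zero hc) h0
          rw [v_pow v hvmul _ hne', v_inv_mul v hvmul _ _ hc h0]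
          exact mul_nonneg (by positivity) (by linarith)
      · rw [if_neg hi]
        exact Or.inl rfl
    have heq : (x * y).coeff n = (teichmuller p c * u).coeff n := by
      rw [h2, hfac]
    rcases key_aux v hvmul hvadd c hc n u ((mem_S0 v hvmul hvadd u).mp huS) with h | h
    · left
      rw [heq, h]
    · right
      refine ⟨q0.1, q0.2, hik, hcx, hcy, ?_⟩
      rw [heq]
      have hvc2 : v c = v (rt x q0.1) + v (rt y q0.2) := by
        rw [hc_def, hvmul _ _ hcx hcy]
      rw [← hvc2]
      exact h
  · left
    rw [h2, hFle_ne, Finset.not_nonempty_iff_eq_empty.mp hne, Finset.sum_empty]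
    simp

end Val


lemma exists_global_bound {α : Type*} [Zero α] (g : ℕ → α) (f : ℕ → ℝ)
    (h : ∃ N, ∀ i, N ≤ i → g i = 0 ∨ 0 ≤ f i) :
    ∃ B : ℝ, B ≤ 0 ∧ ∀ i, g i = 0 ∨ B ≤ f i := by
  obtain ⟨N, hN⟩ := h
  have key : ∀ M : ℕ, ∃ B : ℝ, B ≤ 0 ∧ ∀ i < M, g i = 0 ∨ B ≤ f i := by
    intro M
    induction M with
    | zero => exact ⟨0, le_refl 0, by omega⟩
    | succ M ih =>
      obtain ⟨B, hB0, hB⟩ := ih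
      refine ⟨min B (min 0 (f M)), le_trans (min_le_left _ _) hB0, ?_⟩
      intro i hi
      rcases Nat.lt_succ_iff_lt_or_eq.mp hi with h' | rfl
      · rcases hB i h' with h0 | h0
        · exact Or.inl h0
        · exact Or.inr (le_trans (min_le_left _ _) h0)
      · exact Or.inr (le_trans (min_le_right _ _) (min_le_right _ _))
  obtain ⟨B, hB0, hB⟩ := key N
  refine ⟨B, hB0, fun i => ?_⟩
  by_cases hi : i < N
  · exact hB i hi
  · rcases hN i (by omega) with h0 | h0
    · exact Or.inl h0
    · exact Or.inr (le_trans hB0 h0)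

end OvercAux

open OvercAux in
/-- For a perfect field `K` of characteristic `p` (e.g. `Fr R`) with a rank-1
valuation `v` (given on nonzero elements), and `r > 0`, the set of Witt vectors
`x = ∑ pⁱ [tᵢ]` (with Teichmüller coefficients `tᵢ = (x.coeff i)^(1/pⁱ)`)
satisfying `i + r·v(tᵢ) → ∞` is a subring `W(Fr R)^{†,r}` of `W(Fr R)`. -/
theorem stmt_12 (p : ℕ) [Fact p.Prime] {K : Type*} [Field K]
    [ExpChar K p] [PerfectRing K p]
    (v : K → ℝ)
    (hvmul : ∀ x y : K, x ≠ 0 → y ≠ 0 → v (x * y) = v x + v y)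
    (hvadd : ∀ x y : K, x ≠ 0 → y ≠ 0 → x + y ≠ 0 → min (v x) (v y) ≤ v (x + y))
    (r : ℝ) (hr : 0 < r) :
    ∃ S : Subring (WittVector p K),
      (S : Set (WittVector p K)) =
        {x : WittVector p K | ∀ C : ℝ, ∃ N : ℕ, ∀ i, N ≤ i →
          (⇑(frobeniusEquiv K p).symm)^[i] (x.coeff i) = 0 ∨
          C ≤ (i : ℝ) + r * v ((⇑(frobeniusEquiv K p).symm)^[i] (x.coeff i))} := by
  haveI : CharP K p := by
    cases ‹ExpChar K p› with
    | zero => exact absurd (Fact.out : Nat.Prime 1) (by norm_num)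
    | prime hq => assumption
  set Pset : Set (WittVector p K) :=
    {x : WittVector p K | ∀ C : ℝ, ∃ N : ℕ, ∀ i, N ≤ i →
      (⇑(frobeniusEquiv K p).symm)^[i] (x.coeff i) = 0 ∨
      C ≤ (i : ℝ) + r * v ((⇑(frobeniusEquiv K p).symm)^[i] (x.coeff i))} with hPset
  have hmemP : ∀ x : WittVector p K, x ∈ Pset ↔ ∀ C : ℝ, ∃ N : ℕ, ∀ i, N ≤ i →
      rt x i = 0 ∨ C ≤ (i : ℝ) + r * v (rt x i) := fun x => Iff.rfl
  have hppos : (0:ℝ) < (p:ℝ) := by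
    exact_mod_cast (Fact.out : Nat.Prime p).pos
  -- global lower bounds
  have hglobal : ∀ x ∈ Pset, ∃ B : ℝ, B ≤ 0 ∧
      ∀ i, rt x i = 0 ∨ B ≤ (i : ℝ) + r * v (rt x i) := by
    intro x hx
    exact exists_global_bound (fun i => rt x i)
      (fun i => (i : ℝ) + r * v (rt x i)) (by simpa using (hmemP x).mp hx 0)
  -- zero
  have hzero : (0 : WittVector p K) ∈ Pset := by
    rw [hmemP]
    intro C
    refine ⟨0, fun i _ => Or.inl ?_⟩
    have h0 : (0 : WittVector p K).coeff i = 0 := by simp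
    rw [rt, h0]
    exact root_zero i
  -- one
  have hone : (1 : WittVector p K) ∈ Pset := by
    rw [hmemP]
    intro C
    refine ⟨max 1 (Nat.ceil C), fun i hi => Or.inl ?_⟩
    have h0 : (1 : WittVector p K).coeff i = 0 :=
      WittVector.one_coeff_eq_of_pos p K i (by omega)
    rw [rt, h0]
    exact root_zero i
  -- minus one
  have hnegone : (-1 : WittVector p K) ∈ Pset := by
    rw [hmemP]
    intro C
    refine ⟨Nat.ceil C, fun i hi => ?_⟩
    by_cases hz : (-1 : WittVector p K).coeff i = 0
    · exact Or.inl ((rt_eq_zero_iff _ i).mpr hz)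
    right
    have hvz : v ((-1 : WittVector p K).coeff i) = 0 := by
      set f : ZMod p →+* K := ZMod.castHom dvd_rfl K with hf
      have hmapneg : WittVector.map f (-1 : WittVector p (ZMod p)) = (-1 : WittVector p K) := by
        rw [map_neg, map_one]
      have hcoeff : (-1 : WittVector p K).coeff i
          = f ((-1 : WittVector p (ZMod p)).coeff i) := by
        rw [← hmapneg, WittVector.map_coeff]
      set d := (-1 : WittVector p (ZMod p)).coeff i with hd_def
      have hd : d ≠ 0 := by
        intro h0
        exact hz (by rw [hcoeff, h0, map_zero])
      have hd1 : d ^ (p - 1) = 1 := ZMod.pow_card_sub_one_eq_one hd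
      have hc1 : ((-1 : WittVector p K).coeff i) ^ (p - 1) = 1 := by
        rw [hcoeff, ← map_pow, hd1, map_one]
      have hvp := v_pow v hvmul _ hz (p - 1)
      rw [hc1, v_one v hvmul] at hvp
      have hp1 : ((p - 1 : ℕ) : ℝ) ≠ 0 := by
        have h2 := (Fact.out : Nat.Prime p).two_le
        exact Nat.cast_ne_zero.mpr (by omega)
      exact (mul_eq_zero.mp hvp.symm).resolve_left hp1
    have hvrt : v (rt (-1 : WittVector p K) i) = 0 := by
      have h2 := v_rt v hvmul (-1 : WittVector p K) i hz
      rw [hvz] at h2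
      have hpi : (0:ℝ) < (p:ℝ) ^ i := by positivity
      nlinarith [h2]
    show C ≤ (i:ℝ) + r * v (rt (-1 : WittVector p K) i)
    rw [hvrt]
    have h3 : C ≤ (Nat.ceil C : ℝ) := Nat.le_ceil C
    have h4 : ((Nat.ceil C : ℕ) : ℝ) ≤ (i : ℝ) := by exact_mod_cast hi
    linarith
  -- closure under addition
  have hadd : ∀ a b : WittVector p K, a ∈ Pset → b ∈ Pset → a + b ∈ Pset := by
    intro a b ha hb
    rw [hmemP] at ha hb ⊢
    intro C
    obtain ⟨Bx, _hBx0, hBx⟩ := hglobal a (by rwa [hmemP])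
    obtain ⟨By, _hBy0, hBy⟩ := hglobal b (by rwa [hmemP])
    set B := min Bx By with hB_def
    obtain ⟨Nx, hNx⟩ := ha C
    obtain ⟨Ny, hNy⟩ := hb C
    set N₁ := max Nx Ny with hN₁_def
    refine ⟨N₁ + Nat.ceil (C - B), fun i hi => ?_⟩
    by_cases hz : (a + b).coeff i = 0
    · exact Or.inl ((rt_eq_zero_iff _ i).mpr hz)
    right
    rcases add_shape v hvmul hvadd a b i with h | ⟨j, hj, w, hw, hrw, hbound⟩
    · exact absurd h hz
    have hpi : (0:ℝ) < (p:ℝ) ^ i := by positivity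
    have h1 : v (rt w j) ≤ v (rt (a + b) i) := by
      have h2 : v ((a + b).coeff i) = (p:ℝ) ^ i * v (rt (a + b) i) :=
        v_rt v hvmul _ i hz
      rw [h2] at hbound
      exact le_of_mul_le_mul_left hbound hpi
    have hr' : r * v (rt w j) ≤ r * v (rt (a + b) i) :=
      mul_le_mul_of_nonneg_left h1 hr.le
    have hiN : (N₁ : ℝ) + (C - B) ≤ (i : ℝ) := by
      have h3 : (C - B) ≤ ((Nat.ceil (C - B) : ℕ) : ℝ) := Nat.le_ceil _
      have h4 : ((N₁ + Nat.ceil (C - B) : ℕ) : ℝ) ≤ (i : ℝ) := by exact_mod_cast hi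
      push_cast at h4
      linarith
    have hji : (j : ℝ) ≤ (i : ℝ) := by exact_mod_cast hj
    have hkey : C ≤ (i : ℝ) + r * v (rt w j) := by
      rcases hw with rfl | rfl
      · by_cases hjN : Nx ≤ j
        · rcases hNx j hjN with h0 | h0
          · exact absurd h0 hrw
          · linarith
        · rcases hBx j with h0 | h0
          · exact absurd h0 hrw
          · have hj1 : (j : ℝ) ≤ (N₁ : ℝ) := by
              exact_mod_cast le_of_lt (lt_of_lt_of_le (not_le.mp hjN) (le_max_left Nx Ny))
            have hBB : B ≤ Bx := min_le_left _ _
            linarith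
      · by_cases hjN : Ny ≤ j
        · rcases hNy j hjN with h0 | h0
          · exact absurd h0 hrw
          · linarith
        · rcases hBy j with h0 | h0
          · exact absurd h0 hrw
          · have hj1 : (j : ℝ) ≤ (N₁ : ℝ) := by
              exact_mod_cast le_of_lt (lt_of_lt_of_le (not_le.mp hjN) (le_max_right Nx Ny))
            have hBB : B ≤ By := min_le_right _ _
            linarith
    show C ≤ (i:ℝ) + r * v (rt (a + b) i)
    linarith
  -- closure under multiplication
  have hmul : ∀ a b : WittVector p K, a ∈ Pset → b ∈ Pset → a * b ∈ Pset := by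
    intro a b ha hb
    rw [hmemP] at ha hb ⊢
    intro C
    obtain ⟨Bx, hBx0, hBx⟩ := hglobal a (by rwa [hmemP])
    obtain ⟨By, hBy0, hBy⟩ := hglobal b (by rwa [hmemP])
    set B := min (min Bx By) 0 with hB_def
    have hBBx : B ≤ Bx := le_trans (min_le_left _ _) (min_le_left _ _)
    have hBBy : B ≤ By := le_trans (min_le_left _ _) (min_le_right _ _)
    obtain ⟨Nx, hNx⟩ := ha (C - B)
    obtain ⟨Ny, hNy⟩ := hb (C - B)
    refine ⟨Nx + Ny + Nat.ceil (C - 2 * B), fun i hi => ?_⟩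
    by_cases hz : (a * b).coeff i = 0
    · exact Or.inl ((rt_eq_zero_iff _ i).mpr hz)
    right
    rcases mul_shape v hvmul hvadd a b i with h | ⟨i₀, k₀, hik, hrx, hry, hbound⟩
    · exact absurd h hz
    have hpi : (0:ℝ) < (p:ℝ) ^ i := by positivity
    have h1 : v (rt a i₀) + v (rt b k₀) ≤ v (rt (a * b) i) := by
      have h2 : v ((a * b).coeff i) = (p:ℝ) ^ i * v (rt (a * b) i) :=
        v_rt v hvmul _ i hz
      rw [h2] at hbound
      exact le_of_mul_le_mul_left hbound hpi
    have hr' : r * (v (rt a i₀) + v (rt b k₀)) ≤ r * v (rt (a * b) i) :=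
      mul_le_mul_of_nonneg_left h1 hr.le
    have hiN : (Nx : ℝ) + (Ny : ℝ) + (C - 2 * B) ≤ (i : ℝ) := by
      have h3 : (C - 2 * B) ≤ ((Nat.ceil (C - 2 * B) : ℕ) : ℝ) := Nat.le_ceil _
      have h4 : ((Nx + Ny + Nat.ceil (C - 2 * B) : ℕ) : ℝ) ≤ (i : ℝ) := by exact_mod_cast hi
      push_cast at h4
      linarith
    have hiki : (i₀ : ℝ) + (k₀ : ℝ) ≤ (i : ℝ) := by exact_mod_cast hik
    -- lower bounds on the two root valuations
    have hax : Bx - (i₀ : ℝ) ≤ r * v (rt a i₀) := by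
      rcases hBx i₀ with h0 | h0
      · exact absurd h0 hrx
      · linarith
    have hay : By - (k₀ : ℝ) ≤ r * v (rt b k₀) := by
      rcases hBy k₀ with h0 | h0
      · exact absurd h0 hry
      · linarith
    have hkey : C ≤ (i : ℝ) + r * (v (rt a i₀) + v (rt b k₀)) := by
      by_cases hxN : Nx ≤ i₀
      · rcases hNx i₀ hxN with h0 | h0
        · exact absurd h0 hrx
        · linarith
      by_cases hyN : Ny ≤ k₀
      · rcases hNy k₀ hyN with h0 | h0
        · exact absurd h0 hry
        · linarith
      -- both small
      have hx1 : (i₀ : ℝ) ≤ (Nx : ℝ) := by exact_mod_cast le_of_lt (not_le.mp hxN)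
      have hy1 : (k₀ : ℝ) ≤ (Ny : ℝ) := by exact_mod_cast le_of_lt (not_le.mp hyN)
      linarith
    show C ≤ (i:ℝ) + r * v (rt (a * b) i)
    linarith
  -- negation
  have hneg : ∀ a : WittVector p K, a ∈ Pset → -a ∈ Pset := by
    intro a ha
    have h1 : -a = -1 * a := (neg_one_mul a).symm
    rw [h1]
    exact hmul _ _ hnegone ha
  exact ⟨{ carrier := Pset, zero_mem' := hzero, one_mem' := hone,
           add_mem' := fun {a b} ha hb => hadd a b ha hb,
           mul_mem' := fun {a b} ha hb => hmul a b ha hb,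
           neg_mem' := fun {a} ha => hneg a ha }, rfl⟩
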